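/- arXiv:1502.06722 — 2 statements merged into one kernel-verified Lean document; each statement's English description precedes it below -/
import Mathlib

section
/- For k ≥ 2, consider the action of the lamplighter group L_k on the ring of formal power series ℤ/kℤ[[t]] given by c·F = F + 1 and b·F = (1+t)F. For all but countably many F ∈ ℤ/kℤ[[t]], the stabilizer of F in L_k is trivial. -/
open scoped commutatorElement in
/-- Relators of the standard presentation `⟨b, c | cᵏ, [c, bⁿcb⁻ⁿ]⟩` of the lamplighter
group `ℤ/kℤ ≀ ℤ`, over the alphabet `Bool` with `b = of true` and `c = of false`. -/
def llRels (k : ℕ) : Set (FreeGroup Bool) :=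
  {(FreeGroup.of false) ^ k} ∪
    ⋃ n : ℕ, {⁅FreeGroup.of false,
      (FreeGroup.of true) ^ n * FreeGroup.of false * ((FreeGroup.of true)⁻¹) ^ n⁆}

/-- The lamplighter group `L_k = ℤ/kℤ ≀ ℤ`, via its standard presentation. -/
abbrev Lamplighter (k : ℕ) := PresentedGroup (llRels k)

/-- The generator `b` (the shift). -/
def llb (k : ℕ) : Lamplighter k := PresentedGroup.of true

/-- The generator `c` (the lamp at position 0). -/
def llc (k : ℕ) : Lamplighter k := PresentedGroup.of false

namespace LampAux

open PowerSeries

/-! ### Group-theoretic side -/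

theorem mk_rel {k : ℕ} {r : FreeGroup Bool} (h : r ∈ llRels k) :
    PresentedGroup.mk (llRels k) r = 1 :=
  (QuotientGroup.eq_one_iff r).mpr (Subgroup.subset_normalClosure h)

theorem c_pow_k (k : ℕ) : (llc k) ^ k = 1 := by
  have h := mk_rel (k := k) (Or.inl rfl)
  rw [map_pow] at h
  exact h

open scoped commutatorElement in
theorem commute_c_conj (k : ℕ) (n : ℕ) :
    Commute (llc k) ((llb k) ^ n * llc k * ((llb k)⁻¹) ^ n) := by
  have hmem : (⁅FreeGroup.of false, (FreeGroup.of true) ^ n * FreeGroup.of false *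
      ((FreeGroup.of true)⁻¹) ^ n⁆) ∈ llRels k :=
    Or.inr (Set.mem_iUnion.mpr ⟨n, rfl⟩)
  have h := mk_rel hmem
  rw [map_commutatorElement, map_mul, map_mul, map_pow, map_pow, map_inv,
    commutatorElement_eq_one_iff_commute] at h
  exact h

theorem commute_conj {G : Type*} [Group G] {a b : G} (h : Commute a b) (g : G) :
    Commute (g * a * g⁻¹) (g * b * g⁻¹) := by
  have h1 : (g * a * g⁻¹) * (g * b * g⁻¹) = g * (a * b) * g⁻¹ := by group
  have h2 : (g * b * g⁻¹) * (g * a * g⁻¹) = g * (b * a) * g⁻¹ := by group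
  unfold Commute SemiconjBy
  rw [h1, h2, h.eq]

/-- The lamp at position `n`. -/
def t (k : ℕ) (n : ℤ) : Lamplighter k := (llb k) ^ n * llc k * (llb k) ^ (-n)

theorem commute_c_t (k : ℕ) (n : ℤ) (hn : 0 ≤ n) : Commute (llc k) (t k n) := by
  have h := commute_c_conj k n.toNat
  rw [inv_pow] at h
  rw [t, show n = (n.toNat : ℤ) from (Int.toNat_of_nonneg hn).symm, zpow_neg, zpow_natCast]
  exact h

theorem commute_c_t' (k : ℕ) (n : ℤ) : Commute (llc k) (t k n) := by
  rcases le_or_gt 0 n with h | h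
  · exact commute_c_t k n h
  · have h0 : Commute (llc k) (t k (-n)) := commute_c_t k (-n) (by omega)
    have h1 := commute_conj h0 ((llb k) ^ n)
    have h2 : (llb k) ^ n * llc k * ((llb k) ^ n)⁻¹ = t k n := by
      rw [t, zpow_neg]
    have h3 : (llb k) ^ n * (t k (-n)) * ((llb k) ^ n)⁻¹ = llc k := by
      rw [t, neg_neg, zpow_neg]; group
    rw [h2, h3] at h1
    exact h1.symm

theorem commute_t (k : ℕ) (m n : ℤ) : Commute (t k m) (t k n) := by
  have h1 : t k m = (llb k) ^ m * llc k * ((llb k) ^ m)⁻¹ := by rw [t, zpow_neg]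
  have h2 : t k n = (llb k) ^ m * (t k (n - m)) * ((llb k) ^ m)⁻¹ := by
    rw [t, t]; group
  rw [h1, h2]
  exact (commute_conj (commute_c_t' k (n - m)) _)

/-- The abelian subgroup generated by the lamps. -/
def lampSub (k : ℕ) : Subgroup (Lamplighter k) := Subgroup.closure (Set.range (t k))

noncomputable instance (k : ℕ) : CommGroup (lampSub k) :=
  Subgroup.closureCommGroupOfComm (by
    rintro x ⟨m, rfl⟩ y ⟨n, rfl⟩
    exact commute_t k m n)

/-- The lamp at position `n`, as an element of the abelian subgroup. -/
def tA (k : ℕ) (n : ℤ) : lampSub k := ⟨t k n, Subgroup.subset_closure ⟨n, rfl⟩⟩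

theorem tA_coe (k : ℕ) (n : ℤ) : ((tA k n : lampSub k) : Lamplighter k) = t k n := rfl

theorem tA_pow_k (k : ℕ) (n : ℤ) : (tA k n) ^ k = 1 := by
  apply Subtype.ext
  show (t k n) ^ k = 1
  rw [t, zpow_neg, conj_pow, c_pow_k, mul_one, mul_inv_cancel]

theorem tA_pow_val_add (k : ℕ) (hk : 2 ≤ k) (n : ℤ) (a b : ZMod k) :
    tA k n ^ (a + b).val = tA k n ^ a.val * tA k n ^ b.val := by
  haveI : NeZero k := ⟨by omega⟩
  rw [ZMod.val_add]
  exact ((pow_eq_pow_mod _ (tA_pow_k k n)).symm).trans (pow_add _ _ _)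

theorem tA_pow_neg_one (k : ℕ) (hk : 2 ≤ k) (n : ℤ) :
    tA k n ^ ((-1 : ZMod k)).val = (tA k n)⁻¹ := by
  haveI : NeZero k := ⟨by omega⟩
  haveI := Fact.mk (show 1 < k by omega)
  apply eq_inv_of_mul_eq_one_left
  have h := (tA_pow_val_add k hk n (-1) 1).symm
  rw [neg_add_cancel, ZMod.val_zero, ZMod.val_one, pow_zero, pow_one] at h
  exact h

/-- The product of lamps described by a finitely supported function. -/
noncomputable def Phi (k : ℕ) (f : ℤ →₀ ZMod k) : Lamplighter k :=
  ((f.prod fun n a => tA k n ^ a.val : lampSub k) : Lamplighter k)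

theorem Phi_zero (k : ℕ) : Phi k 0 = 1 := by
  rw [Phi, Finsupp.prod_zero_index]
  rfl

theorem Phi_add_single (k : ℕ) (hk : 2 ≤ k) (f : ℤ →₀ ZMod k) (n : ℤ) (a : ZMod k) :
    Phi k (f + Finsupp.single n a)
      = Phi k f * ((tA k n ^ a.val : lampSub k) : Lamplighter k) := by
  haveI : NeZero k := ⟨by omega⟩
  rw [Phi, Finsupp.prod_add_index' (fun i => by rw [ZMod.val_zero, pow_zero]; rfl)
      (fun i b c => tA_pow_val_add k hk i b c),
    Finsupp.prod_single_index (by rw [ZMod.val_zero, pow_zero]; rfl)]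
  rfl

/-! ### Power series side -/

theorem isUnit_one_add_X (k : ℕ) : IsUnit (1 + X : PowerSeries (ZMod k)) := by
  rw [PowerSeries.isUnit_iff_constantCoeff, map_add, map_one, constantCoeff_X, add_zero]
  exact isUnit_one

/-- `1 + X` as a unit of the power series ring. -/
noncomputable def uu (k : ℕ) : (PowerSeries (ZMod k))ˣ := (isUnit_one_add_X k).unit

theorem uu_val (k : ℕ) : ((uu k : (PowerSeries (ZMod k))ˣ) : PowerSeries (ZMod k)) = 1 + X :=
  IsUnit.unit_spec _

/-- `ε f = ∑ f n • (1+X)^n`. -/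
noncomputable def eps (k : ℕ) (f : ℤ →₀ ZMod k) : PowerSeries (ZMod k) :=
  f.sum fun n a => a • ((uu k ^ n : (PowerSeries (ZMod k))ˣ) : PowerSeries (ZMod k))

theorem eps_zero (k : ℕ) : eps k 0 = 0 := Finsupp.sum_zero_index

theorem eps_add (k : ℕ) (f g : ℤ →₀ ZMod k) : eps k (f + g) = eps k f + eps k g :=
  Finsupp.sum_add_index' (fun _ => zero_smul _ _) (fun _ b c => add_smul b c _)

theorem eps_single (k : ℕ) (n : ℤ) (a : ZMod k) :
    eps k (Finsupp.single n a) = a • ((uu k ^ n : (PowerSeries (ZMod k))ˣ) : PowerSeries (ZMod k)) :=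
  Finsupp.sum_single_index (zero_smul _ _)

theorem coeff_one_add_X_pow (k : ℕ) (r m : ℕ) :
    (PowerSeries.coeff m) ((1 + X : PowerSeries (ZMod k)) ^ r) = r.choose m := by
  have h : ((1 + X : PowerSeries (ZMod k))) =
      ((1 + Polynomial.X : Polynomial (ZMod k)) : PowerSeries (ZMod k)) := by
    rw [Polynomial.coe_add, Polynomial.coe_one, Polynomial.coe_X]
  rw [h, ← Polynomial.coe_pow, Polynomial.coeff_coe, Polynomial.coeff_one_add_X_pow]

theorem uu_zpow_eq (k : ℕ) (n : ℤ) (hn : 0 ≤ n) :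
    ((uu k ^ n : (PowerSeries (ZMod k))ˣ) : PowerSeries (ZMod k)) = (1 + X) ^ n.toNat := by
  conv_lhs => rw [show n = (n.toNat : ℤ) from (Int.toNat_of_nonneg hn).symm]
  rw [zpow_natCast, Units.val_pow_eq_pow_val, uu_val]

theorem uu_pow_ne_one (k : ℕ) (hk : 2 ≤ k) {m : ℕ} (hm : 0 < m) :
    ((1 + X : PowerSeries (ZMod k))) ^ m ≠ 1 := by
  haveI := Fact.mk (show 1 < k by omega)
  intro h
  have h2 := congrArg (PowerSeries.coeff m) h
  rw [coeff_one_add_X_pow, Nat.choose_self, Nat.cast_one, PowerSeries.coeff_one, if_neg hm.ne'] at h2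
  exact one_ne_zero h2

theorem uu_zpow_inj (k : ℕ) (hk : 2 ≤ k) {i : ℤ} (h : uu k ^ i = 1) : i = 0 := by
  by_contra hi
  have hm : 0 < i.natAbs := Int.natAbs_pos.mpr hi
  have hpow : (uu k) ^ (i.natAbs) = 1 := by
    rcases Int.natAbs_eq i with he | he
    · rw [← zpow_natCast, ← he, h]
    · have : uu k ^ (-(i.natAbs : ℤ)) = 1 := by rw [← he, h]
      rw [zpow_neg, inv_eq_one, zpow_natCast] at this
      exact this
  have := congrArg (Units.val) hpow
  rw [Units.val_pow_eq_pow_val, uu_val, Units.val_one] at this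
  exact uu_pow_ne_one k hk hm this

theorem eps_inj (k : ℕ) (hk : 2 ≤ k) {f : ℤ →₀ ZMod k} (h : eps k f = 0) : f = 0 := by
  by_contra hf
  have hs : f.support.Nonempty := Finsupp.support_nonempty_iff.mpr hf
  set N := f.support.min' hs with hN
  set M := f.support.max' hs with hM
  have hMs : M ∈ f.support := f.support.max'_mem hs
  have hNM : N ≤ M := f.support.min'_le M hMs
  -- multiply the relation by `u^(-N)`
  have h2 : (f.sum fun n a =>
      a • ((uu k ^ (n - N) : (PowerSeries (ZMod k))ˣ) : PowerSeries (ZMod k))) = 0 := by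
    have h3 := congrArg
      (fun x => ((uu k ^ (-N) : (PowerSeries (ZMod k))ˣ) : PowerSeries (ZMod k)) * x) h
    simp only [mul_zero] at h3
    rw [eps, Finsupp.mul_sum] at h3
    rw [← h3]
    apply Finsupp.sum_congr
    intro n _
    rw [mul_smul_comm, ← Units.val_mul, ← zpow_add, sub_eq_neg_add]
  -- extract the coefficient of `X^((M-N).toNat)`
  have h4 := congrArg (PowerSeries.coeff ((M - N).toNat)) h2
  rw [map_zero, map_finsuppSum] at h4
  have h5 : (f.sum fun n a =>
      a * (((n - N).toNat.choose ((M - N).toNat) : ZMod k))) = 0 := by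
    rw [← h4]
    apply Finsupp.sum_congr
    intro n hn
    have hNn : N ≤ n := f.support.min'_le n hn
    rw [LinearMap.map_smul, uu_zpow_eq k _ (by omega), coeff_one_add_X_pow, smul_eq_mul]
  rw [Finsupp.sum, Finset.sum_eq_single_of_mem M hMs] at h5
  · rw [Nat.choose_self, Nat.cast_one, mul_one] at h5
    exact (Finsupp.mem_support_iff.mp hMs) h5
  · intro n hn hne
    have hNn : N ≤ n := f.support.min'_le n hn
    have hnM : n ≤ M := f.support.le_max' n hn
    have hlt : (n - N).toNat < (M - N).toNat := by omega
    rw [Nat.choose_eq_zero_of_lt hlt, Nat.cast_zero, mul_zero]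

/-! ### Regularity of `(1+X)^m - 1` -/

theorem torsion_cast_eq (k p : ℕ) (hp : p ∣ k) (m : ℕ) :
    ((k / p * (m % p) : ℕ) : ZMod k) = ((k / p * m : ℕ) : ZMod k) := by
  have hnat : k / p * m = k * (m / p) + k / p * (m % p) := by
    conv_lhs => rw [← Nat.div_add_mod m p]
    rw [Nat.mul_add, ← Nat.mul_assoc, Nat.div_mul_cancel hp]
  rw [hnat]
  push_cast
  rw [ZMod.natCast_self]
  ring

/-- The embedding `ℤ/pℤ → ℤ/kℤ`, `y ↦ (k/p)·y`. -/
def theta (k p : ℕ) (y : ZMod p) : ZMod k := ((k / p * y.val : ℕ) : ZMod k)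

theorem theta_add (k p : ℕ) [NeZero p] (hp : p ∣ k) (y z : ZMod p) :
    theta k p (y + z) = theta k p y + theta k p z := by
  rw [theta, theta, theta, ZMod.val_add, torsion_cast_eq k p hp, Nat.mul_add]
  push_cast
  ring

/-- `theta` as an additive monoid hom. -/
def thetaA (k p : ℕ) [NeZero p] (hp : p ∣ k) : ZMod p →+ ZMod k :=
  AddMonoidHom.mk' (theta k p) (theta_add k p hp)

theorem theta_inj (k p : ℕ) [NeZero k] [NeZero p] (hp : p ∣ k) {y : ZMod p}
    (h : theta k p y = 0) : y = 0 := by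
  rw [theta, ZMod.natCast_eq_zero_iff] at h
  have hq0 : 0 < k / p :=
    Nat.div_pos (Nat.le_of_dvd (Nat.pos_of_ne_zero (NeZero.ne k)) hp)
      (Nat.pos_of_ne_zero (NeZero.ne p))
  obtain ⟨c, hc⟩ := h
  have hy : y.val = p * c := by
    apply Nat.eq_of_mul_eq_mul_left hq0
    rw [hc, ← Nat.mul_assoc, Nat.div_mul_cancel hp]
  have hyv : y.val = 0 := by
    have hlt := ZMod.val_lt y
    rcases Nat.eq_zero_or_pos c with h0 | h0
    · rw [hy, h0, Nat.mul_zero]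
    · exfalso
      have : p * 1 ≤ p * c := Nat.mul_le_mul_left p h0
      omega
  exact (ZMod.val_eq_zero y).mp hyv

theorem theta_section (k p : ℕ) [NeZero k] [NeZero p] (hp : p ∣ k) {x : ZMod k}
    (h : p • x = 0) : theta k p (((x.val / (k / p) : ℕ) : ZMod p)) = x := by
  have hx : ((x.val : ℕ) : ZMod k) = x := by
    rw [ZMod.natCast_val, ZMod.cast_id]
  have h2 : ((p * x.val : ℕ) : ZMod k) = 0 := by
    rw [Nat.cast_mul, hx, ← nsmul_eq_mul, h]
  rw [ZMod.natCast_eq_zero_iff] at h2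
  have hq : (k / p) ∣ x.val := by
    obtain ⟨c, hc⟩ := h2
    refine ⟨c, ?_⟩
    have hp0 : 0 < p := Nat.pos_of_ne_zero (NeZero.ne p)
    apply Nat.eq_of_mul_eq_mul_left hp0
    rw [hc, ← Nat.mul_assoc, Nat.mul_div_cancel' hp]
  rw [theta, ZMod.val_natCast, torsion_cast_eq k p hp, Nat.mul_div_cancel' hq, hx]


/-- `theta` applied coefficientwise to power series. -/
noncomputable def thetaHat (k p : ℕ) (G : PowerSeries (ZMod p)) : PowerSeries (ZMod k) :=
  PowerSeries.mk fun n => theta k p (PowerSeries.coeff n G)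

theorem thetaHat_inj (k p : ℕ) [NeZero k] [NeZero p] (hp : p ∣ k) {G : PowerSeries (ZMod p)}
    (h : thetaHat k p G = 0) : G = 0 := by
  ext n
  rw [map_zero]
  apply theta_inj k p hp
  have h2 := congrArg (PowerSeries.coeff n) h
  rwa [thetaHat, PowerSeries.coeff_mk, map_zero] at h2

theorem thetaHat_mul (k p : ℕ) [NeZero k] [NeZero p] (hp : p ∣ k)
    (V : PowerSeries ℤ) (G : PowerSeries (ZMod p)) :
    thetaHat k p (PowerSeries.map (Int.castRingHom (ZMod p)) V * G)
      = PowerSeries.map (Int.castRingHom (ZMod k)) V * thetaHat k p G := by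
  ext n
  rw [thetaHat, PowerSeries.coeff_mk, PowerSeries.coeff_mul, PowerSeries.coeff_mul]
  have hth : theta k p = ⇑(thetaA k p hp) := rfl
  rw [hth, map_sum]
  apply Finset.sum_congr rfl
  intro ij _
  rw [PowerSeries.coeff_map, PowerSeries.coeff_map, thetaHat, PowerSeries.coeff_mk]
  set c := PowerSeries.coeff ij.1 V
  set y := PowerSeries.coeff ij.2 G
  show thetaA k p hp ((c : ZMod p) * y) = (c : ZMod k) * thetaA k p hp y
  rw [← zsmul_eq_mul, ← zsmul_eq_mul, map_zsmul]

theorem thetaHat_zero (k p : ℕ) : thetaHat k p 0 = 0 := by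
  ext n
  rw [thetaHat, PowerSeries.coeff_mk, map_zero, map_zero, theta]
  simp [ZMod.val_zero]

theorem one_add_X_pow_sub_one_regular (k : ℕ) (hk : 2 ≤ k) {m : ℕ} (hm : 0 < m)
    {F : PowerSeries (ZMod k)} (h : ((1 + X : PowerSeries (ZMod k)) ^ m - 1) * F = 0) :
    F = 0 := by
  haveI : NeZero k := ⟨by omega⟩
  by_contra hF
  have hko : k • F = 0 := by
    have h1 : ((k : ℕ) : ZMod k) • F = 0 := by rw [ZMod.natCast_self, zero_smul]
    rwa [Nat.cast_smul_eq_nsmul] at h1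
  set o := addOrderOf F with ho
  have hok : o ∣ k := addOrderOf_dvd_of_nsmul_eq_zero hko
  have ho1 : o ≠ 1 := fun h1 => hF (AddMonoid.addOrderOf_eq_one_iff.mp h1)
  have ho0 : o ≠ 0 := by
    intro h0
    rw [h0] at hok
    exact (by omega : ¬k = 0) (Nat.eq_zero_of_zero_dvd hok)
  set p := o.minFac with hpdef
  have pp : p.Prime := Nat.minFac_prime ho1
  haveI : NeZero p := ⟨pp.pos.ne'⟩
  have hpo : p ∣ o := Nat.minFac_dvd o
  have hpk : p ∣ k := hpo.trans hok
  set F' := (o / p) • F with hF'def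
  have hop0 : 0 < o := Nat.pos_of_ne_zero ho0
  have hpF' : p • F' = 0 := by
    rw [hF'def, smul_smul, Nat.mul_div_cancel' hpo]
    exact addOrderOf_nsmul_eq_zero F
  have hF'0 : F' ≠ 0 := by
    intro h0
    have hdvd : o ∣ o / p := addOrderOf_dvd_iff_nsmul_eq_zero.mpr h0
    have h1 : 0 < o / p := Nat.div_pos (Nat.minFac_le hop0) pp.pos
    have h2 : o / p < o := Nat.div_lt_self hop0 pp.one_lt
    exact absurd (Nat.le_of_dvd h1 hdvd) (by omega)
  have hwF' : ((1 + X : PowerSeries (ZMod k)) ^ m - 1) * F' = 0 := by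
    rw [hF'def, mul_smul_comm, h, smul_zero]
  set G : PowerSeries (ZMod p) := PowerSeries.mk
    (fun n => (((PowerSeries.coeff n F').val / (k / p) : ℕ) : ZMod p)) with hGdef
  have hFG : thetaHat k p G = F' := by
    ext n
    rw [thetaHat, PowerSeries.coeff_mk, hGdef, PowerSeries.coeff_mk]
    apply theta_section k p hpk
    rw [← Nat.cast_smul_eq_nsmul (ZMod k), ← map_smul, Nat.cast_smul_eq_nsmul, hpF',
      map_zero]
  set V : PowerSeries ℤ := (1 + X) ^ m - 1 with hVdef
  have hVk : PowerSeries.map (Int.castRingHom (ZMod k)) V = (1 + X) ^ m - 1 := by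
    simp [hVdef, map_sub, map_pow, map_add, map_one, PowerSeries.map_X]
  have hVp : PowerSeries.map (Int.castRingHom (ZMod p)) V = (1 + X) ^ m - 1 := by
    simp [hVdef, map_sub, map_pow, map_add, map_one, PowerSeries.map_X]
  have hprod : thetaHat k p (PowerSeries.map (Int.castRingHom (ZMod p)) V * G) = 0 := by
    rw [thetaHat_mul k p hpk, hFG, hVk, hwF']
  have hzero : ((1 + X : PowerSeries (ZMod p)) ^ m - 1) * G = 0 := by
    have h2 := thetaHat_inj k p hpk hprod
    rwa [hVp] at h2
  haveI := Fact.mk pp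
  rcases mul_eq_zero.mp hzero with hw | hG0
  · rw [sub_eq_zero] at hw
    have hpoly : ((1 + Polynomial.X : Polynomial (ZMod p))) ^ m = 1 := by
      have hcast : (((1 + Polynomial.X : Polynomial (ZMod p)) ^ m : Polynomial (ZMod p)) :
          PowerSeries (ZMod p)) = ((1 : Polynomial (ZMod p)) : PowerSeries (ZMod p)) := by
        rw [Polynomial.coe_pow, Polynomial.coe_add, Polynomial.coe_one, Polynomial.coe_X]
        exact hw
      exact Polynomial.coe_injective (ZMod p) hcast
    have hdeg := congrArg Polynomial.natDegree hpoly
    rw [Polynomial.natDegree_one, add_comm, ← Polynomial.C_1,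
      Polynomial.natDegree_pow_X_add_C] at hdeg
    omega
  · rw [hG0, thetaHat_zero] at hFG
    exact hF'0 hFG.symm


/-! ### The normal form / action computation -/

theorem t_mul_b_pow (k : ℕ) (i : ℤ) : t k i * (llb k) ^ i = (llb k) ^ i * llc k := by
  rw [t, zpow_neg]; group

theorem t_inv_mul_b_pow (k : ℕ) (i : ℤ) :
    (t k i)⁻¹ * (llb k) ^ i = (llb k) ^ i * (llc k)⁻¹ := by
  rw [t, zpow_neg]; group

theorem key (k : ℕ) (hk : 2 ≤ k)
    (φ : Lamplighter k →* Equiv.Perm (PowerSeries (ZMod k)))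
    (hc : ∀ F, φ (llc k) F = F + 1)
    (hb : ∀ F, φ (llb k) F = (1 + X) * F)
    (g : Lamplighter k) :
    ∃ (i : ℤ) (f : ℤ →₀ ZMod k),
      (∀ F, φ g F = ((uu k ^ i : (PowerSeries (ZMod k))ˣ) : PowerSeries (ZMod k)) * F + eps k f)
        ∧ g = Phi k f * (llb k) ^ i := by
  haveI : NeZero k := ⟨by omega⟩
  haveI := Fact.mk (show 1 < k by omega)
  have hofb : (PresentedGroup.of true : Lamplighter k) = llb k := rfl
  have hofc : (PresentedGroup.of false : Lamplighter k) = llc k := rfl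
  have hmem : g ∈ Subgroup.closure (Set.range (PresentedGroup.of : Bool → Lamplighter k)) := by
    rw [PresentedGroup.closure_range_of]
    exact Subgroup.mem_top g
  refine Subgroup.closure_induction_right ?_ ?_ ?_ hmem
  · refine ⟨0, 0, fun F => ?_, ?_⟩
    · simp [eps_zero]
    · rw [Phi_zero, zpow_zero, mul_one]
  · rintro x - y ⟨x0, rfl⟩ ⟨i, f, hF, hg⟩
    cases x0 with
    | true =>
      refine ⟨i + 1, f, fun F => ?_, ?_⟩
      · rw [map_mul, Equiv.Perm.mul_apply, hofb, hb F, hF ((1 + X) * F)]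
        congr 1
        rw [← mul_assoc, ← uu_val k, ← Units.val_mul, ← zpow_add_one]
      · rw [hofb, hg, mul_assoc, ← zpow_add_one]
    | false =>
      refine ⟨i, f + Finsupp.single i 1, fun F => ?_, ?_⟩
      · rw [map_mul, Equiv.Perm.mul_apply, hofc, hc F, hF (F + 1), eps_add, eps_single,
          one_smul]
        ring
      · rw [hofc, hg, Phi_add_single k hk, ZMod.val_one, pow_one, tA_coe, mul_assoc,
          ← t_mul_b_pow, ← mul_assoc]
  · rintro x - y ⟨x0, rfl⟩ ⟨i, f, hF, hg⟩
    cases x0 with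
    | true =>
      refine ⟨i - 1, f, fun F => ?_, ?_⟩
      · rw [map_mul, map_inv, Equiv.Perm.mul_apply, hofb]
        have hG : (1 + X) * ((φ (llb k))⁻¹ F) = F := by
          rw [← hb ((φ (llb k))⁻¹ F)]
          exact Equiv.apply_symm_apply (φ (llb k)) F
        rw [hF ((φ (llb k))⁻¹ F)]
        congr 1
        conv_rhs => rw [← hG]
        rw [← mul_assoc]
        congr 1
        rw [← uu_val k, ← Units.val_mul, ← zpow_add_one, sub_add_cancel]
      · rw [hofb, hg, mul_assoc, ← zpow_sub_one]
    | false =>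
      refine ⟨i, f + Finsupp.single i (-1), fun F => ?_, ?_⟩
      · rw [map_mul, map_inv, Equiv.Perm.mul_apply, hofc]
        have hG : ((φ (llc k))⁻¹ F) + 1 = F := by
          rw [← hc ((φ (llc k))⁻¹ F)]
          exact Equiv.apply_symm_apply (φ (llc k)) F
        rw [hF ((φ (llc k))⁻¹ F), eq_sub_of_add_eq hG, eps_add, eps_single, neg_smul, one_smul]
        ring
      · rw [hofc, hg, Phi_add_single k hk, tA_pow_neg_one k hk, InvMemClass.coe_inv, tA_coe,
          mul_assoc, ← t_inv_mul_b_pow, ← mul_assoc]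

instance : Countable (FreeGroup Bool) :=
  Function.Injective.countable FreeGroup.toWord_injective

instance (k : ℕ) : Countable (Lamplighter k) :=
  Function.Surjective.countable (PresentedGroup.mk_surjective (llRels k))

end LampAux

/-- For the action of the lamplighter group `L_k` on `ℤ/kℤ[[t]]` with
`c · F = F + 1` and `b · F = (1+t)·F`, all but countably many `F` have trivial
stabilizer: the set of `F` fixed by some nontrivial group element is countable. -/
theorem lamplighter_power_series_stabilizers (k : ℕ) (hk : 2 ≤ k)
    (φ : Lamplighter k →* Equiv.Perm (PowerSeries (ZMod k)))
    (hc : ∀ F, φ (llc k) F = F + 1)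
    (hb : ∀ F, φ (llb k) F = (1 + PowerSeries.X) * F) :
    Set.Countable {F : PowerSeries (ZMod k) | ∃ g : Lamplighter k, g ≠ 1 ∧ φ g F = F} := by
  classical
  open LampAux in
  have hsets : {F : PowerSeries (ZMod k) | ∃ g : Lamplighter k, g ≠ 1 ∧ φ g F = F}
      = ⋃ (g : Lamplighter k), {F : PowerSeries (ZMod k) | g ≠ 1 ∧ φ g F = F} := by
    ext F
    simp [Set.mem_iUnion]
  rw [hsets]
  apply Set.countable_iUnion
  intro g
  by_cases hg1 : g = 1
  · have he : {F : PowerSeries (ZMod k) | g ≠ 1 ∧ φ g F = F} = ∅ := by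
      ext F
      simp [hg1]
    rw [he]
    exact Set.countable_empty
  · apply Set.Subsingleton.countable
    intro F1 hF1 F2 hF2
    obtain ⟨i, f, hF, hg⟩ := LampAux.key k hk φ hc hb g
    have h1 : ((LampAux.uu k ^ i : (PowerSeries (ZMod k))ˣ) : PowerSeries (ZMod k)) * F1
        + LampAux.eps k f = F1 := by rw [← hF F1]; exact hF1.2
    have h2 : ((LampAux.uu k ^ i : (PowerSeries (ZMod k))ˣ) : PowerSeries (ZMod k)) * F2
        + LampAux.eps k f = F2 := by rw [← hF F2]; exact hF2.2
    by_cases hi : i = 0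
    · exfalso
      rw [hi] at h1
      simp only [zpow_zero, Units.val_one, one_mul] at h1
      have hf0 : LampAux.eps k f = 0 := add_eq_left.mp h1
      have hfz := LampAux.eps_inj k hk hf0
      rw [hfz, LampAux.Phi_zero, hi, zpow_zero, mul_one] at hg
      exact hg1 hg
    · have hD : ((LampAux.uu k ^ i : (PowerSeries (ZMod k))ˣ) : PowerSeries (ZMod k))
          * (F1 - F2) = F1 - F2 := by
        linear_combination h1 - h2
      set m := i.natAbs with hmdef
      have hm : 0 < m := Int.natAbs_pos.mpr hi
      have hDu : ((LampAux.uu k ^ (m : ℤ) : (PowerSeries (ZMod k))ˣ) : PowerSeries (ZMod k))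
          * (F1 - F2) = F1 - F2 := by
        rcases Int.natAbs_eq i with he | he
        · rw [← he]; exact hD
        · have h3 : ((LampAux.uu k ^ (m : ℤ) : (PowerSeries (ZMod k))ˣ) : PowerSeries (ZMod k))
              * (((LampAux.uu k ^ i : (PowerSeries (ZMod k))ˣ) : PowerSeries (ZMod k))
                * (F1 - F2))
              = ((LampAux.uu k ^ (m : ℤ) : (PowerSeries (ZMod k))ˣ) : PowerSeries (ZMod k))
                * (F1 - F2) := by rw [hD]
          rw [← mul_assoc, ← Units.val_mul, ← zpow_add, he, add_neg_cancel, zpow_zero,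
            Units.val_one, one_mul] at h3
          exact h3.symm
      have hDm : ((1 + PowerSeries.X : PowerSeries (ZMod k)) ^ m - 1) * (F1 - F2) = 0 := by
        rw [sub_mul, one_mul, sub_eq_zero]
        have hup : ((LampAux.uu k ^ (m : ℤ) : (PowerSeries (ZMod k))ˣ) : PowerSeries (ZMod k))
            = (1 + PowerSeries.X) ^ m := by
          rw [LampAux.uu_zpow_eq k (m : ℤ) (Int.natCast_nonneg m), Int.toNat_natCast]
        rw [← hup]
        exact hDu
      have hD0 := LampAux.one_add_X_pow_sub_one_regular k hk hm hDm
      exact sub_eq_zero.mp hD0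
end

section
/- Let k ≥ 2, N ≥ 1 and M = Nl for some l ≥ 1. The oriented spider-web graph S_{k,N,Nl} is isomorphic, as an oriented graph, to the Cayley graph of the group G = (⊕_{i=1}^N ℤ/kℤ) ⋊ ℤ/Nlℤ (where ℤ/Nlℤ acts by cyclically shifting the N coordinates) with respect to the generating set {cⁱb : 0 ≤ i ≤ k−1}, where b generates ℤ/Nlℤ and c generates the first ℤ/kℤ coordinate. In particular, for M = N, S_{k,N,N} is a Cayley graph of the finite lamplighter group (ℤ/kℤ) ≀ (ℤ/Nℤ). -/
/-- Cyclic shift by `a`, as an automorphism of `⊕_{ZMod N} ZMod k` written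
multiplicatively. -/
def shiftMulAut (k N : ℕ) (a : ZMod N) : MulAut (Multiplicative (ZMod N → ZMod k)) where
  toFun f := Multiplicative.ofAdd fun j => Multiplicative.toAdd f (j - a)
  invFun f := Multiplicative.ofAdd fun j => Multiplicative.toAdd f (j + a)
  left_inv f := by simp
  right_inv f := by simp
  map_mul' f g := rfl

/-- The shift action of `ℤ/Nlℤ` on `⊕_{i=1}^N ℤ/kℤ` (written multiplicatively), via the
reduction `ℤ/Nlℤ → ℤ/Nℤ`. -/
def shiftHom (k N l : ℕ) :
    Multiplicative (ZMod (N * l)) →* MulAut (Multiplicative (ZMod N → ZMod k)) where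
  toFun a := shiftMulAut k N (ZMod.castHom (dvd_mul_right N l) (ZMod N) (Multiplicative.toAdd a))
  map_one' := by
    apply MulEquiv.ext
    intro f
    simp [shiftMulAut]
  map_mul' a b := by
    apply MulEquiv.ext
    intro f
    rw [MulAut.mul_apply]
    simp only [shiftMulAut, ZMod.castHom_apply, toAdd_mul, MulEquiv.coe_mk, Equiv.coe_fn_mk,
      toAdd_ofAdd, ZMod.cast_add (dvd_mul_right N l), sub_sub]

/-- The group `(⊕_{i=1}^N ℤ/kℤ) ⋊ ℤ/Nlℤ`, where `ℤ/Nlℤ` acts by cyclically shifting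
the `N` coordinates. -/
abbrev SpiderGroup (k N l : ℕ) :=
  SemidirectProduct (Multiplicative (ZMod N → ZMod k)) (Multiplicative (ZMod (N * l)))
    (shiftHom k N l)

/-- The generator `cⁱ·b` of `SpiderGroup k N l`, for `i ∈ {0,…,k−1}`: here `c` generates
the `0`-th coordinate `ℤ/kℤ` and `b` is the generator `1` of `ℤ/Nlℤ`. -/
def spiderGen (k N l : ℕ) (i : ZMod k) : SpiderGroup k N l :=
  SemidirectProduct.inl (Multiplicative.ofAdd (Pi.single (0 : ZMod N) i)) *
    SemidirectProduct.inr (Multiplicative.ofAdd (1 : ZMod (N * l)))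

/-- An oriented (multi)graph: vertices, edges, initial and terminal maps. -/
structure OGraph where
  V : Type
  E : Type
  ι : E → V
  τ : E → V

/-- Isomorphism of oriented graphs. -/
structure OGraph.Iso (G H : OGraph) where
  fV : G.V ≃ H.V
  fE : G.E ≃ H.E
  hι : ∀ e, H.ι (fE e) = fV (G.ι e)
  hτ : ∀ e, H.τ (fE e) = fV (G.τ e)

/-- The oriented right Cayley graph of a group with generators indexed by `f : X → G`. -/
def cayleyO (G : Type) [Group G] {X : Type} (f : X → G) : OGraph where
  V := G
  E := G × X
  ι e := e.1
  τ e := e.1 * f e.2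

/-- The oriented spider-web graph `S_{k,N,M}`: vertices `{0,…,k−1}^N × ℤ/Mℤ`, with an
edge from `(x₁…x_N, i)` to `(x₂…x_N y, i+1)` for each symbol `y : ZMod k`. -/
def spider (k N M : ℕ) : OGraph where
  V := (Fin N → ZMod k) × ZMod M
  E := ((Fin N → ZMod k) × ZMod M) × ZMod k
  ι e := e.1
  τ e := (fun j => if h : (j : ℕ) + 1 < N then e.1.1 ⟨(j : ℕ) + 1, h⟩ else e.2, e.1.2 + 1)


section Aux

variable (k N l : ℕ)

/-- The reduction `ZMod (N*l) → ZMod N`. -/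
def redN (m : ZMod (N * l)) : ZMod N := ZMod.castHom (dvd_mul_right N l) (ZMod N) m

/-- Vertex bijection. -/
def phiV (hN : 0 < N) : (Fin N → ZMod k) × ZMod (N * l) ≃ SpiderGroup k N l where
  toFun p :=
    ⟨Multiplicative.ofAdd fun j =>
      p.1 ⟨(j - redN N l p.2).val, @ZMod.val_lt N ⟨hN.ne'⟩ _⟩,
     Multiplicative.ofAdd p.2⟩
  invFun g :=
    (fun s => Multiplicative.toAdd g.left
        (redN N l (Multiplicative.toAdd g.right) + ((s : ℕ) : ZMod N)),
     Multiplicative.toAdd g.right)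
  left_inv p := by
    haveI : NeZero N := ⟨hN.ne'⟩
    refine Prod.ext ?_ rfl
    funext s
    simp only [toAdd_ofAdd, add_sub_cancel_left]
    congr!
    exact ZMod.val_cast_of_lt s.isLt
  right_inv g := by
    haveI : NeZero N := ⟨hN.ne'⟩
    refine SemidirectProduct.ext ?_ (by simp)
    simp only [toAdd_ofAdd]
    refine (ofAdd_toAdd g.left) ▸ congrArg Multiplicative.ofAdd (funext fun j => ?_)
    simp [ZMod.natCast_val, ZMod.cast_id]


lemma shiftHom_apply (a : Multiplicative (ZMod (N * l))) (f : Multiplicative (ZMod N → ZMod k)) :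
    shiftHom k N l a f = Multiplicative.ofAdd
      (fun j => Multiplicative.toAdd f (j - redN N l (Multiplicative.toAdd a))) := rfl

lemma spiderGen_eq (w : ZMod k) :
    spiderGen k N l w = ⟨Multiplicative.ofAdd (Pi.single (0 : ZMod N) w),
      Multiplicative.ofAdd (1 : ZMod (N * l))⟩ := by
  refine SemidirectProduct.ext ?_ ?_ <;>
    simp [spiderGen, SemidirectProduct.mul_left, SemidirectProduct.mul_right]

lemma main_comp (hN : 0 < N) [NeZero N] (x : Fin N → ZMod k) (y : ZMod k) (m j : ZMod N) :
    x ⟨(j - m).val, ZMod.val_lt _⟩ + (Pi.single (0 : ZMod N) (y - x ⟨0, hN⟩) : ZMod N → ZMod k) (j - m) =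
      if h : (j - (m + 1)).val + 1 < N then x ⟨(j - (m + 1)).val + 1, h⟩ else y := by
  by_cases hj : j = m
  · subst hj
    have h1 : j - (j + 1) = -1 := by ring
    have h3 : ((-1 : ZMod N)).val = N - 1 := by
      have h2 : (-1 : ZMod N) = ((N - 1 : ℕ) : ZMod N) := by
        simp [Nat.cast_sub hN]
      rw [h2, ZMod.val_cast_of_lt (by omega)]
    simp only [sub_self, Pi.single_eq_same, h1, h3]
    rw [dif_neg (by omega)]
    have e0 : (⟨(0 : ZMod N).val, @ZMod.val_lt N ‹_› _⟩ : Fin N) = ⟨0, hN⟩ := by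
      congr!
      exact ZMod.val_zero
    rw [e0]
    ring
  · have hj' : j - m ≠ 0 := sub_ne_zero.mpr hj
    have hv1 : 1 ≤ (j - m).val := by
      rcases Nat.eq_zero_or_pos (j - m).val with h | h
      · exact absurd ((ZMod.val_eq_zero _).mp h) hj'
      · omega
    have hvN : (j - m).val < N := ZMod.val_lt _
    have h4 : j - (m + 1) = (((j - m).val - 1 : ℕ) : ZMod N) := by
      rw [Nat.cast_sub hv1, ZMod.natCast_val, ZMod.cast_id, Nat.cast_one]
      ring
    have h5 : (j - (m + 1)).val = (j - m).val - 1 := by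
      rw [h4, ZMod.val_cast_of_lt (by omega)]
    rw [Pi.single_eq_of_ne hj', add_zero]
    simp only [h5]
    rw [dif_pos (show (j - m).val - 1 + 1 < N by omega)]
    congr!
    omega

lemma key (hN : 0 < N) (x : Fin N → ZMod k) (i : ZMod (N * l)) (y : ZMod k) :
    phiV k N l hN (x, i) * spiderGen k N l (y - x ⟨0, hN⟩) =
      phiV k N l hN
        (fun j => if h : (j : ℕ) + 1 < N then x ⟨(j : ℕ) + 1, h⟩ else y, i + 1) := by
  haveI : NeZero N := ⟨hN.ne'⟩
  refine SemidirectProduct.ext ?_ ?_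
  · rw [SemidirectProduct.mul_left, spiderGen_eq]
    simp only [phiV, Equiv.coe_fn_mk, shiftHom_apply, toAdd_ofAdd, ← ofAdd_add]
    refine congrArg Multiplicative.ofAdd (funext fun j => ?_)
    simp only [Pi.add_apply]
    have hred : redN N l (i + 1) = redN N l i + 1 := by simp [redN, map_add, map_one]
    simp only [hred]
    exact main_comp k N hN x y (redN N l i) j
  · simp only [SemidirectProduct.mul_right, spiderGen_eq, phiV, Equiv.coe_fn_mk, ← ofAdd_add]

end Aux

/-- For `k ≥ 2`, `N ≥ 1` and `M = N·l`, the oriented spider-web graph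
`S_{k,N,Nl}` is isomorphic, as an oriented graph, to the Cayley graph of
`(⊕_{i=1}^N ℤ/kℤ) ⋊ ℤ/Nlℤ` (shift action) with respect to the generating set
`{cⁱb : 0 ≤ i ≤ k−1}`.  (In particular, for `l = 1` it is a Cayley graph of the finite
lamplighter group `ℤ/kℤ ≀ ℤ/Nℤ`.) -/
theorem spider_iso_cayley_semidirect (k N l : ℕ) (hk : 2 ≤ k) (hN : 1 ≤ N) (hl : 1 ≤ l) :
    Nonempty (OGraph.Iso (spider k N (N * l))
      (cayleyO (SpiderGroup k N l) (spiderGen k N l))) := by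
  have hN0 : 0 < N := hN
  exact ⟨{ fV := phiV k N l hN0
           fE := { toFun := fun e => ((phiV k N l hN0) e.1, e.2 - e.1.1 ⟨0, hN0⟩)
                   invFun := fun e => ((phiV k N l hN0).symm e.1,
                     e.2 + ((phiV k N l hN0).symm e.1).1 ⟨0, hN0⟩)
                   left_inv := fun e => by simp; rfl
                   right_inv := fun e => by simp; rfl }
           hι := fun e => rfl
           hτ := fun e => key k N l hN0 e.1.1 e.1.2 e.2 }⟩
end
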